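/- Fix an integer k > 2. For all n ≥ m ≥ 4k² with n > m, d(m,n) ≤ √m / 2 (equivalently, d(m,n) ≤ ⌊√m/2⌋, since d(m,n) is a natural number). -/

import Mathlib

/-- `f i` for `i ≥ 1`: `f 1 n = n + 1`, `f (i+1) n = (f i)^[⌊√n/2⌋] n`. -/
def f : ℕ → ℕ → ℕ
  | 0, n => n
  | 1, n => n + 1
  | i + 2, n => (f (i + 1))^[Nat.sqrt n / 2] n

/-- `d k i m n = |{l : m < f_i^(l)(4k²) ≤ n}|`. -/
noncomputable def d (k i m n : ℕ) : ℕ :=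
  {l : ℕ | m < (f i)^[l] (4 * k ^ 2) ∧ (f i)^[l] (4 * k ^ 2) ≤ n}.ncard

/-- `I k m n` is the greatest `i ≥ 1` with `d k i m n > 0`. -/
noncomputable def I (k m n : ℕ) : ℕ := sSup {i : ℕ | 1 ≤ i ∧ 0 < d k i m n}

/-- `D k m n = d_{I(m,n)}(m,n)`. -/
noncomputable def D (k m n : ℕ) : ℕ := d k (I k m n) m n

/-- The standard pairing function `Pr(m,n) = C(m+n+1,2) + n`. -/
def Pr (m n : ℕ) : ℕ := (m + n + 1).choose 2 + n

/-- The coloring `c({m,n}) = Pr(I(m,n), d(m,n))` (on pairs `m < n`). -/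
noncomputable def c (k m n : ℕ) : ℕ := Pr (I k m n) (D k m n)


lemma iter_add_le {g : ℕ → ℕ} (hg : ∀ x, 4 ≤ x → x < g x) :
    ∀ (j x : ℕ), 4 ≤ x → x + j ≤ g^[j] x := by
  intro j
  induction j with
  | zero => simp
  | succ j ih =>
    intro x hx
    rw [Function.iterate_succ_apply]
    have h1 := hg x hx
    have := ih (g x) (by omega)
    omega

lemma iter_sMono {g : ℕ → ℕ} (hg : ∀ x, 4 ≤ x → x < g x) {x : ℕ} (hx : 4 ≤ x) :
    StrictMono (fun l => g^[l] x) := by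
  apply strictMono_nat_of_lt_succ
  intro l
  simp only [Function.iterate_succ_apply']
  exact hg _ (le_trans hx (by have := iter_add_le hg l x hx; omega))

lemma f_gt_aux : ∀ i, ∀ n, 4 ≤ n → n < f (i + 1) n := by
  intro i
  induction i with
  | zero => intro n hn; exact Nat.lt_succ_self n
  | succ j ih =>
    intro n hn
    show n < (f (j + 1))^[Nat.sqrt n / 2] n
    have hs : 1 ≤ Nat.sqrt n / 2 := by
      have : 2 ≤ Nat.sqrt n := Nat.le_sqrt.mpr (by omega)
      omega
    have := iter_add_le (fun x hx => ih x hx) (Nat.sqrt n / 2) n hn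
    omega

lemma f_gt {i : ℕ} (hi : 1 ≤ i) : ∀ x, 4 ≤ x → x < f i x := by
  obtain ⟨j, rfl⟩ : ∃ j, i = j + 1 := ⟨i - 1, by omega⟩
  exact f_gt_aux j

lemma f_succ {i : ℕ} (hi : 1 ≤ i) (x : ℕ) :
    f (i + 1) x = (f i)^[Nat.sqrt x / 2] x := by
  obtain ⟨j, rfl⟩ : ∃ j, i = j + 1 := ⟨i - 1, by omega⟩
  rfl

lemma f_base {k : ℕ} (hk : 2 < k) : ∀ i, 1 ≤ i → 4 * k ^ 2 + i ≤ f i (4 * k ^ 2) := by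
  have hsq : Nat.sqrt (4 * k ^ 2) = 2 * k := by
    have h : 4 * k ^ 2 = (2 * k) * (2 * k) := by ring
    rw [h, Nat.sqrt_eq]
  have hx04 : 4 ≤ 4 * k ^ 2 := by nlinarith
  intro i
  induction i with
  | zero => omega
  | succ j ih =>
    intro _
    rcases Nat.eq_zero_or_pos j with hj | hj
    · subst hj; show 4 * k ^ 2 + 1 ≤ 4 * k ^ 2 + 1; omega
    · have hih := ih hj
      have hgj : ∀ x, 4 ≤ x → x < f j x := f_gt hj
      rw [f_succ hj, hsq]
      have hk2 : 2 * k / 2 = k := by omega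
      rw [hk2]
      have h1 : (f j)^[k] (4 * k ^ 2) = (f j)^[k - 1] (f j (4 * k ^ 2)) := by
        rw [← Function.iterate_succ_apply]
        congr 1
        omega
      have h2 : f j (4 * k ^ 2) + (k - 1) ≤ (f j)^[k - 1] (f j (4 * k ^ 2)) :=
        iter_add_le hgj (k - 1) _ (by omega)
      omega

lemma key_fin {g : ℕ → ℕ} (hg : ∀ x, 4 ≤ x → x < g x) {x0 : ℕ} (hx0 : 4 ≤ x0) (m n : ℕ) :
    {l : ℕ | m < g^[l] x0 ∧ g^[l] x0 ≤ n}.Finite := by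
  apply Set.Finite.subset (Set.finite_Iic n)
  intro l hl
  have := iter_add_le hg l x0 hx0
  exact le_trans (by omega) hl.2

lemma key2 {g : ℕ → ℕ} (hg : ∀ x, 4 ≤ x → x < g x) {x0 m n : ℕ} (hx0 : 4 ≤ x0)
    (hx0m : x0 ≤ m)
    (hd : 0 < {l : ℕ | m < g^[l] x0 ∧ g^[l] x0 ≤ n}.ncard) :
    ∃ l0, 1 ≤ l0 ∧ (∀ l, l < l0 → g^[l] x0 ≤ m) ∧
      ∀ j, j < {l : ℕ | m < g^[l] x0 ∧ g^[l] x0 ≤ n}.ncard →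
        m < g^[l0 + j] x0 ∧ g^[l0 + j] x0 ≤ n := by
  set S := {l : ℕ | m < g^[l] x0 ∧ g^[l] x0 ≤ n} with hS
  have hmono := iter_sMono hg hx0
  have hfin : S.Finite := key_fin hg hx0 m n
  have hne : S.Nonempty := Set.nonempty_of_ncard_ne_zero (by omega)
  have hex : ∃ l, m < g^[l] x0 := by
    obtain ⟨l, hl⟩ := hne
    exact ⟨l, hl.1⟩
  set l0 := Nat.find hex with hl0def
  have hl0spec : m < g^[l0] x0 := Nat.find_spec hex
  have hl0min : ∀ l, l < l0 → g^[l] x0 ≤ m := by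
    intro l hl
    have := Nat.find_min hex hl
    omega
  have hl01 : 1 ≤ l0 := by
    by_contra h
    have : l0 = 0 := by omega
    rw [this] at hl0spec
    simp at hl0spec
    omega
  -- maximum
  obtain ⟨M, hMS, hMmax⟩ := hfin.exists_maximalFor id S hne
  have hIcc : S = Set.Icc l0 M := by
    ext l
    constructor
    · rintro ⟨h1, h2⟩
      refine ⟨?_, ?_⟩
      · by_contra h
        push_neg at h
        have := hl0min l h
        omega
      · by_contra h
        push_neg at h
        have hle : g^[M] x0 ≤ g^[l] x0 := (hmono.le_iff_le).mpr (le_of_lt h)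
        have hMl : l ≤ M := hMmax (j := l) ⟨h1, h2⟩ (le_of_lt h)
        omega
    · rintro ⟨h1, h2⟩
      have hml : g^[l0] x0 ≤ g^[l] x0 := hmono.le_iff_le.mpr h1
      have hlM : g^[l] x0 ≤ g^[M] x0 := hmono.le_iff_le.mpr h2
      exact ⟨by omega, le_trans hlM hMS.2⟩
  have hcard : S.ncard = M + 1 - l0 := by
    rw [hIcc, show Set.Icc l0 M = ↑(Finset.Icc l0 M) by simp, Set.ncard_coe_finset,
      Nat.card_Icc]
  refine ⟨l0, hl01, hl0min, ?_⟩
  intro j hj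
  have : l0 + j ∈ S := by
    rw [hIcc]
    refine ⟨by omega, by omega⟩
  exact ⟨this.1, this.2⟩
theorem D_le_sqrt_div_two (k : ℕ) (hk : 2 < k) (m n : ℕ)
    (hm : 4 * k ^ 2 ≤ m) (hmn : m < n) :
    D k m n ≤ Nat.sqrt m / 2 := by
  by_contra hD
  push_neg at hD
  have hk3 : 3 ≤ k := hk
  have hx04 : 4 ≤ 4 * k ^ 2 := by nlinarith
  have hm36 : 36 ≤ m := by nlinarith
  have hs3 : 3 ≤ Nat.sqrt m / 2 := by
    have : 6 ≤ Nat.sqrt m := Nat.le_sqrt.mpr (by omega)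
    omega
  have hD0 : 0 < D k m n := by omega
  have hI1 : 1 ≤ I k m n := by
    by_contra h
    have h0 : I k m n = 0 := by omega
    have hz : D k m n = 0 := by
      unfold D d
      rw [h0]
      convert Set.ncard_empty ℕ using 2
      ext l
      simp only [Set.mem_setOf_eq, Set.mem_empty_iff_false, iff_false, not_and]
      intro h1
      exfalso
      have hid : f 0 = id := rfl
      rw [hid, Function.iterate_id, id_eq] at h1
      omega
    omega
  set i := I k m n with hIdef
  have hgi : ∀ x, 4 ≤ x → x < f i x := f_gt hI1
  have hd : 0 < {l : ℕ | m < (f i)^[l] (4 * k ^ 2) ∧ (f i)^[l] (4 * k ^ 2) ≤ n}.ncard := by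
    have := hD0
    unfold D d at this
    exact this
  obtain ⟨l0, hl01, hl0min, hl0int⟩ := key2 hgi hx04 hm hd
  -- orbit of f (i+1)
  have horb : ∀ t, ∃ σ, (f (i + 1))^[t] (4 * k ^ 2) = (f i)^[σ] (4 * k ^ 2) := by
    intro t
    induction t with
    | zero => exact ⟨0, rfl⟩
    | succ t ih =>
      obtain ⟨σ, hσ⟩ := ih
      refine ⟨Nat.sqrt ((f i)^[σ] (4 * k ^ 2)) / 2 + σ, ?_⟩
      rw [Function.iterate_succ_apply', hσ, f_succ hI1, ← Function.iterate_add_apply]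
  have hgG : ∀ x, 4 ≤ x → x < f (i + 1) x := f_gt (by omega)
  have hex : ∃ t, m < (f (i + 1))^[t] (4 * k ^ 2) := by
    refine ⟨m + 1, ?_⟩
    have := iter_add_le hgG (m + 1) (4 * k ^ 2) hx04
    omega
  set t0 := Nat.find hex with ht0def
  have ht0spec : m < (f (i + 1))^[t0] (4 * k ^ 2) := Nat.find_spec hex
  have ht01 : 1 ≤ t0 := by
    by_contra h
    have h0 : t0 = 0 := by omega
    rw [h0] at ht0spec
    simp at ht0spec
    omega
  have hprev : (f (i + 1))^[t0 - 1] (4 * k ^ 2) ≤ m := by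
    have := Nat.find_min hex (show t0 - 1 < t0 by omega)
    omega
  obtain ⟨σ, hσ⟩ := horb (t0 - 1)
  have hprev4 : 4 ≤ (f i)^[σ] (4 * k ^ 2) := by
    have := iter_add_le hgi σ (4 * k ^ 2) hx04
    omega
  set j := Nat.sqrt ((f i)^[σ] (4 * k ^ 2)) / 2 with hjdef
  have ht0eq : (f (i + 1))^[t0] (4 * k ^ 2) = (f i)^[j + σ] (4 * k ^ 2) := by
    have h1 : t0 = (t0 - 1) + 1 := by omega
    rw [h1, Function.iterate_succ_apply', hσ, f_succ hI1, ← Function.iterate_add_apply]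
  have hjle : j ≤ Nat.sqrt m / 2 := by
    rw [hσ] at hprev
    exact Nat.div_le_div_right (Nat.sqrt_le_sqrt hprev)
  have hj1 : 1 ≤ j := by
    have : 2 ≤ Nat.sqrt ((f i)^[σ] (4 * k ^ 2)) := Nat.le_sqrt.mpr (by omega)
    omega
  have hmono := iter_sMono hgi hx04
  have hσl0 : σ < l0 := by
    by_contra h
    push_neg at h
    have h2 : (f i)^[l0] (4 * k ^ 2) ≤ (f i)^[σ] (4 * k ^ 2) := hmono.le_iff_le.mpr h
    have h3 := (hl0int 0 hd).1
    rw [hσ] at hprev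
    simp only [Nat.add_zero] at h3
    omega
  have hl0le : l0 ≤ j + σ := by
    by_contra h
    push_neg at h
    have := hl0min (j + σ) h
    rw [ht0eq] at ht0spec
    omega
  set dd := {l : ℕ | m < (f i)^[l] (4 * k ^ 2) ∧ (f i)^[l] (4 * k ^ 2) ≤ n}.ncard with hdd
  have hDdd : D k m n = dd := rfl
  have hjlt : j + σ - l0 < dd := by
    rw [hDdd] at hD
    omega
  have hint := hl0int (j + σ - l0) hjlt
  have heq2 : l0 + (j + σ - l0) = j + σ := by omega
  rw [heq2] at hint
  -- so d k (i+1) m n > 0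
  have hd1 : 0 < d k (i + 1) m n := by
    unfold d
    rw [Set.ncard_pos (key_fin hgG hx04 m n)]
    exact ⟨t0, by simp only [Set.mem_setOf_eq]; rw [ht0eq]; exact hint⟩
  have hbdd : BddAbove {i' : ℕ | 1 ≤ i' ∧ 0 < d k i' m n} := by
    refine ⟨n, fun i' hi' => ?_⟩
    obtain ⟨hi'1, hi'd⟩ := hi'
    unfold d at hi'd
    obtain ⟨l, hl1, hl2⟩ := Set.nonempty_of_ncard_ne_zero (by omega :
      {l : ℕ | m < (f i')^[l] (4 * k ^ 2) ∧ (f i')^[l] (4 * k ^ 2) ≤ n}.ncard ≠ 0)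
    have hgi' : ∀ x, 4 ≤ x → x < f i' x := f_gt hi'1
    have hl0' : 1 ≤ l := by
      by_contra h
      have : l = 0 := by omega
      rw [this] at hl1
      simp at hl1
      omega
    have h1 : (f i')^[l] (4 * k ^ 2) = (f i')^[l - 1] (f i' (4 * k ^ 2)) := by
      rw [← Function.iterate_succ_apply]
      congr 1
      omega
    have h2 : f i' (4 * k ^ 2) + (l - 1) ≤ (f i')^[l - 1] (f i' (4 * k ^ 2)) :=
      iter_add_le hgi' (l - 1) _ (by have := hgi' _ hx04; omega)
    have h3 := f_base hk i' hi'1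
    omega
  have : i + 1 ≤ i := by
    have hmem : i + 1 ∈ {i' : ℕ | 1 ≤ i' ∧ 0 < d k i' m n} := ⟨by omega, hd1⟩
    calc i + 1 ≤ sSup {i' : ℕ | 1 ≤ i' ∧ 0 < d k i' m n} := le_csSup hbdd hmem
    _ = i := rfl
  omega
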